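/- Let A be a finite digraph that is a core (every endomorphism of A is an automorphism) with tree duality, i.e., every digraph admitting no homomorphism to A contains a homomorphic image of an oriented tree admitting no homomorphism to A. Then A is rigid: the identity is the only endomorphism of A. -/

import Mathlib

def Hom {α β : Type*} (E : α → α → Prop) (F : β → β → Prop) (f : α → β) : Prop :=
  ∀ u v, E u v → F (f u) (f v)

/-- A digraph is an oriented tree when its underlying undirected graph is a tree. -/
def IsOrientedTree {T : Type} (G : T → T → Prop) : Prop :=
  (SimpleGraph.fromRel G).IsTree

/-- `(A, E)` has tree duality: every digraph with no homomorphism to `A` admits a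
homomorphism from an oriented tree which itself has no homomorphism to `A`. -/
def TreeDuality (A : Type) (E : A → A → Prop) : Prop :=
  ∀ (B : Type) (F : B → B → Prop), (¬ ∃ f : B → A, Hom F E f) →
    ∃ (T : Type) (G : T → T → Prop), IsOrientedTree G ∧
      (∃ g : T → B, Hom G F g) ∧ ¬ ∃ h : T → A, Hom G E h

section Aux

open SimpleGraph

variable {T : Type} {α : Type*}

/-- Propagate a value along a walk, using a "step" function over each edge. -/
def chainVal {S : SimpleGraph T} (σ : T → Set α)
    (step : ∀ u v, S.Adj u v → ∀ x : α, x ∈ σ u → {y : α // y ∈ σ v}) :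
    ∀ {u v : T}, S.Walk u v → ∀ x : α, x ∈ σ u → {y : α // y ∈ σ v}
  | _, _, Walk.nil, x, hx => ⟨x, hx⟩
  | _, _, Walk.cons h q, x, hx =>
      chainVal σ step q (step _ _ h x hx).1 (step _ _ h x hx).2

lemma chainVal_concat {S : SimpleGraph T} (σ : T → Set α)
    (step : ∀ u v, S.Adj u v → ∀ x : α, x ∈ σ u → {y : α // y ∈ σ v})
    {u v w : T} (p : S.Walk u v) (h : S.Adj v w) (x : α) (hx : x ∈ σ u) :
    chainVal σ step (p.concat h) x hx
      = step v w h (chainVal σ step p x hx).1 (chainVal σ step p x hx).2 := by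
  induction p generalizing x with
  | nil =>
      simp only [Walk.concat_nil]
      rfl
  | cons h' q ih =>
      rw [Walk.concat_cons]
      simp only [chainVal]
      exact ih _ _ _

/-- The tree-lifting lemma: if each vertex of an (irreflexive, antisymmetric) oriented
tree carries a nonempty set of possible values, with forward and backward lifting of
edges, then the tree admits a homomorphism to `(α, E)`. -/
theorem tree_lift (G : T → T → Prop) (hT : IsOrientedTree G)
    (E : α → α → Prop) (σ : T → Set α)
    (hne : ∀ t, (σ t).Nonempty)
    (hfwd : ∀ t t', G t t' → ∀ x ∈ σ t, ∃ y ∈ σ t', E x y)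
    (hbwd : ∀ t t', G t t' → ∀ y ∈ σ t', ∃ x ∈ σ t, E x y)
    (hirr : ∀ t, ¬ G t t)
    (hasym : ∀ t t', G t t' → ¬ G t' t) :
    ∃ h : T → α, Hom G E h := by
  classical
  unfold IsOrientedTree at hT
  set S := SimpleGraph.fromRel G with hS
  obtain ⟨⟨r⟩, huniq⟩ := SimpleGraph.isTree_iff_existsUnique_path.1 hT
  -- rich step function
  have stepEx : ∀ u v, S.Adj u v → ∀ x : α, x ∈ σ u →
      ∃ y : α, y ∈ σ v ∧ (G u v → E x y) ∧ (G v u → E y x) := by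
    intro u v hadj x hx
    by_cases hG : G u v
    · obtain ⟨y, hy, hE⟩ := hfwd u v hG x hx
      exact ⟨y, hy, fun _ => hE, fun hvu => absurd hvu (hasym u v hG)⟩
    · have hvu : G v u := by
        rcases (SimpleGraph.fromRel_adj G u v).1 hadj with ⟨_, h | h⟩
        · exact absurd h hG
        · exact h
      obtain ⟨y, hy, hE⟩ := hbwd v u hvu x hx
      exact ⟨y, hy, fun h => absurd h hG, fun _ => hE⟩
  let step : ∀ u v, S.Adj u v → ∀ x : α, x ∈ σ u →
      {y : α // y ∈ σ v ∧ (G u v → E x y) ∧ (G v u → E y x)} :=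
    fun u v hadj x hx => ⟨(stepEx u v hadj x hx).choose, (stepEx u v hadj x hx).choose_spec⟩
  let stepF : ∀ u v, S.Adj u v → ∀ x : α, x ∈ σ u → {y : α // y ∈ σ v} :=
    fun u v hadj x hx => ⟨(step u v hadj x hx).1, (step u v hadj x hx).2.1⟩
  obtain ⟨x₀, hx₀⟩ := hne r
  let pth : ∀ t, S.Walk r t := fun t => (huniq r t).choose
  have pthPath : ∀ t, (pth t).IsPath := fun t => (huniq r t).choose_spec.1
  have pthUniq : ∀ t (q : S.Walk r t), q.IsPath → q = pth t :=
    fun t q hq => (huniq r t).choose_spec.2 q hq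
  let val : ∀ t, {y : α // y ∈ σ t} := fun t => chainVal σ stepF (pth t) x₀ hx₀
  refine ⟨fun t => (val t).1, ?_⟩
  intro t t' hG
  have hnett' : t ≠ t' := fun he => hirr t (by rw [he] at hG ⊢; exact hG)
  have adj : S.Adj t t' := (SimpleGraph.fromRel_adj G t t').2 ⟨hnett', Or.inl hG⟩
  by_cases hmem : t' ∈ (pth t).support
  · -- pth t = (pth t').concat adj.symm
    have hpre : (pth t).takeUntil t' hmem = pth t' :=
      pthUniq t' _ ((pthPath t).takeUntil hmem)
    have hsingle : (Walk.cons adj.symm Walk.nil : S.Walk t' t).IsPath := by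
      rw [Walk.cons_isPath_iff]
      constructor
      · exact Walk.IsPath.nil
      · simp [Ne.symm hnett']
    have hsuf : (pth t).dropUntil t' hmem = Walk.cons adj.symm Walk.nil :=
      ExistsUnique.unique (huniq t' t) ((pthPath t).dropUntil hmem) hsingle
    have hdecomp : pth t = (pth t').concat adj.symm := by
      have h1 := (pth t).take_spec hmem
      rw [hpre, hsuf] at h1
      rw [← h1, Walk.concat_eq_append]
    have hval : val t = stepF t' t adj.symm (val t').1 (val t').2 := by
      show chainVal σ stepF (pth t) x₀ hx₀ = _
      rw [hdecomp, chainVal_concat]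
    have hprop := (step t' t adj.symm (val t').1 (val t').2).2.2.2 hG
    show E (val t).1 (val t').1
    rw [hval]
    exact hprop
  · -- pth t' = (pth t).concat adj
    have hq : ((pth t).concat adj).IsPath := by
      rw [← Walk.isPath_reverse_iff, Walk.reverse_concat, Walk.cons_isPath_iff]
      refine ⟨(Walk.isPath_reverse_iff _).2 (pthPath t), ?_⟩
      rw [Walk.support_reverse]
      simpa using hmem
    have hdecomp : pth t' = (pth t).concat adj := (pthUniq t' _ hq).symm
    have hval : val t' = stepF t t' adj (val t).1 (val t).2 := by
      show chainVal σ stepF (pth t') x₀ hx₀ = _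
      rw [hdecomp, chainVal_concat]
    have hprop := (step t t' adj (val t).1 (val t).2).2.2.1 hG
    show E (val t).1 (val t').1
    rw [hval]
    exact hprop

end Aux

/-- A finite core digraph with tree duality is rigid: its only endomorphism is the
identity. -/
theorem stmt9 (A : Type) [Fintype A] (E : A → A → Prop)
    (hcore : ∀ f : A → A, Hom E E f → Function.Bijective f)
    (htree : TreeDuality A E) :
    ∀ f : A → A, Hom E E f → f = id := by
  classical
  intro f hf
  by_cases hloopEx : ∃ a, E a a
  · -- A has a loop: constant maps are endomorphisms, so A is a subsingleton
    obtain ⟨a, ha⟩ := hloopEx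
    have hconst : Hom E E (fun _ => a) := fun _ _ _ => ha
    have hsub : ∀ x y : A, x = y := fun x y => (hcore _ hconst).1 rfl
    funext x
    exact hsub (f x) x
  · push_neg at hloopEx
    -- Key: there is no nonempty forward-and-backward closed subset of A
    have cycSet : ∀ S : Set A, S.Nonempty → (∀ x ∈ S, ∃ y ∈ S, E x y) →
        (∀ y ∈ S, ∃ x ∈ S, E x y) → False := by
      intro S hSne hSfwd hSbwd
      -- the transitive tournament on |A| + 1 vertices has no homomorphism to A
      have nohomB : ¬ ∃ g : Fin (Fintype.card A + 1) → A,
          Hom (fun i j : Fin (Fintype.card A + 1) => i < j) E g := by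
        rintro ⟨g, hg⟩
        have hinj : Function.Injective g := by
          intro i j hij
          by_contra hne
          rcases Ne.lt_or_gt hne with hlt | hlt
          · exact hloopEx (g j) (hij ▸ hg i j hlt)
          · exact hloopEx (g i) (hij ▸ hg j i hlt)
        have := Fintype.card_le_of_injective g hinj
        simp at this
      obtain ⟨T, G, hTree, ⟨g, hg⟩, hnoh⟩ := htree _ _ nohomB
      apply hnoh
      exact tree_lift G hTree E (fun _ => S)
        (fun _ => hSne)
        (fun t t' _ x hx => hSfwd x hx)
        (fun t t' _ y hy => hSbwd y hy)
        (fun t ht => lt_irrefl _ (hg t t ht))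
        (fun t t' h1 h2 => absurd (hg t' t h2) (not_lt_of_gt (hg t t' h1)))
    -- the power structure
    have hPow : ∃ h : {S : Set A // S.Nonempty} → A,
        Hom (fun X Y : {S : Set A // S.Nonempty} =>
          (∀ x ∈ X.1, ∃ y ∈ Y.1, E x y) ∧ (∀ y ∈ Y.1, ∃ x ∈ X.1, E x y)) E h := by
      set F : {S : Set A // S.Nonempty} → {S : Set A // S.Nonempty} → Prop :=
        fun X Y => (∀ x ∈ X.1, ∃ y ∈ Y.1, E x y) ∧ (∀ y ∈ Y.1, ∃ x ∈ X.1, E x y) with hF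
      by_contra hno
      obtain ⟨T, G, hTree, ⟨g, hg⟩, hnoh⟩ := htree _ F hno
      apply hnoh
      refine tree_lift G hTree E (fun t => (g t).1) (fun t => (g t).2)
        (fun t t' hG x hx => (hg t t' hG).1 x hx)
        (fun t t' hG y hy => (hg t t' hG).2 y hy)
        (fun t ht => ?_) (fun t t' h1 h2 => ?_)
      · exact cycSet (g t).1 (g t).2 (hg t t ht).1 (hg t t ht).2
      · -- a 2-cycle in the power structure gives a closed set (the union)
        have hXY := hg t t' h1
        have hYX := hg t' t h2
        refine cycSet ((g t).1 ∪ (g t').1) (Set.Nonempty.inl (g t).2) ?_ ?_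
        · rintro x (hx | hx)
          · obtain ⟨y, hy, hE⟩ := hXY.1 x hx
            exact ⟨y, Or.inr hy, hE⟩
          · obtain ⟨y, hy, hE⟩ := hYX.1 x hx
            exact ⟨y, Or.inl hy, hE⟩
        · rintro y (hy | hy)
          · obtain ⟨x, hx, hE⟩ := hYX.2 y hy
            exact ⟨x, Or.inr hx, hE⟩
          · obtain ⟨x, hx, hE⟩ := hXY.2 y hy
            exact ⟨x, Or.inl hx, hE⟩
    obtain ⟨h, hh⟩ := hPow
    -- f is bijective, hence some iterate is the identity
    have hbij := hcore f hf
    have hiterhom : ∀ n, Hom E E f^[n] := by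
      intro n
      induction n with
      | zero => intro u v huv; simpa using huv
      | succ n ih =>
          intro u v huv
          rw [Function.iterate_succ_apply', Function.iterate_succ_apply']
          exact hf _ _ (ih u v huv)
    obtain ⟨i, j, hij, hEq⟩ :=
      Finite.exists_ne_map_eq_of_infinite (fun n : ℕ => f^[n])
    have key : ∀ i j : ℕ, i < j → f^[i] = f^[j] → ∃ k, 0 < k ∧ ∀ x, f^[k] x = x := by
      intro i j hlt he
      refine ⟨j - i, Nat.sub_pos_of_lt hlt, fun x => ?_⟩
      have hinj : Function.Injective f^[i] := hbij.injective.iterate i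
      apply hinj
      have : f^[i] (f^[j - i] x) = f^[i + (j - i)] x := by
        rw [Function.iterate_add_apply]
      rw [this, Nat.add_sub_cancel' (le_of_lt hlt), ← he]
    obtain ⟨k, hk, hfk⟩ : ∃ k, 0 < k ∧ ∀ x, f^[k] x = x := by
      rcases hij.lt_or_gt with hlt | hlt
      · exact key i j hlt hEq
      · exact key j i hlt hEq.symm
    -- orbits
    let orb : A → {S : Set A // S.Nonempty} :=
      fun a => ⟨Set.range (fun n => f^[n] a), ⟨a, 0, rfl⟩⟩
    have horb : ∀ a b, E a b →
        (∀ x ∈ (orb a).1, ∃ y ∈ (orb b).1, E x y) ∧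
        (∀ y ∈ (orb b).1, ∃ x ∈ (orb a).1, E x y) := by
      intro a b hab
      constructor
      · rintro x ⟨n, rfl⟩
        exact ⟨f^[n] b, ⟨n, rfl⟩, hiterhom n a b hab⟩
      · rintro y ⟨n, rfl⟩
        exact ⟨f^[n] a, ⟨n, rfl⟩, hiterhom n a b hab⟩
    have horbf : ∀ a, orb (f a) = orb a := by
      intro a
      apply Subtype.ext
      ext x
      simp only [orb, Set.mem_range]
      constructor
      · rintro ⟨n, rfl⟩
        exact ⟨n + 1, by rw [Function.iterate_succ_apply]⟩
      · rintro ⟨n, rfl⟩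
        refine ⟨n + (k - 1), ?_⟩
        have h1 : f^[n + (k - 1)] (f a) = f^[n + (k - 1) + 1] a := by
          rw [Function.iterate_succ_apply]
        have h2 : n + (k - 1) + 1 = n + k := by omega
        rw [h1, h2, Function.iterate_add_apply, hfk]
    let e : A → A := fun a => h (orb a)
    have he : Hom E E e := fun u v huv => hh _ _ (horb u v huv)
    have heinj := (hcore e he).1
    funext a
    show f a = a
    exact heinj (congrArg h (horbf a))
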